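/- Assume in addition that w is locally Lipschitz. Let t₁ > 0, let u : I → Ω be differentiable on an interval I with u̇(τ) = w(u(τ)) for all τ ∈ I and φ_a([0,t₁]) ⊆ I, and let x : [0,t₁] → Ω be differentiable with ẋ(t) = a(t)w(x(t)) for all t ∈ [0,t₁] and x(0) = u(0). Then x(t) = u(φ_a(t)) for every t ∈ [0,t₁]; in particular, if ∫₀^{t₁} a(s)ds = t₁, then x(t₁) = u(t₁). (This identifies the Poincaré t₁-translation operator of the equation ẋ = a(t)w(x) with that of ẋ = w(x).) -/

import Mathlib

open Set Metric


/-- Uniqueness for the reparametrized equation: if `w` is locally Lipschitz, `u̇ = w(u)` on `I`,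
and `x` solves `ẋ = a(t)w(x)` on `[0,t₁]` with `x(0) = u(0)`, then `x(t) = u(φ_a(t))` on
`[0,t₁]`; in particular if `∫₀^{t₁} a = t₁` then `x(t₁) = u(t₁)`. -/
theorem stmt4 {n : ℕ}
    (Ω : Set (Fin n → ℝ)) (hΩ : IsOpen Ω)
    (w : (Fin n → ℝ) → (Fin n → ℝ)) (hw : ContinuousOn w Ω)
    (hwlip : ∀ z ∈ Ω, ∃ ε > (0:ℝ), ∃ K : NNReal,
      LipschitzOnWith K w (Metric.ball z ε ∩ Ω))
    (a : ℝ → ℝ) (ha : Continuous a)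
    (t₁ : ℝ) (ht₁ : 0 < t₁)
    (I : Set ℝ) (hI : I.OrdConnected)
    (u : ℝ → (Fin n → ℝ))
    (humem : ∀ τ ∈ I, u τ ∈ Ω)
    (hu : ∀ τ ∈ I, HasDerivAt u (w (u τ)) τ)
    (hsub : (fun t => ∫ s in (0:ℝ)..t, a s) '' Set.Icc (0:ℝ) t₁ ⊆ I)
    (x : ℝ → (Fin n → ℝ))
    (hxmem : ∀ t ∈ Set.Icc (0:ℝ) t₁, x t ∈ Ω)
    (hx : ∀ t ∈ Set.Icc (0:ℝ) t₁, HasDerivAt x (a t • w (x t)) t)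
    (hx0 : x 0 = u 0) :
    (∀ t ∈ Set.Icc (0:ℝ) t₁, x t = u (∫ s in (0:ℝ)..t, a s)) ∧
    ((∫ s in (0:ℝ)..t₁, a s) = t₁ → x t₁ = u t₁) := by
  set φ : ℝ → ℝ := fun t => ∫ s in (0:ℝ)..t, a s with hφdef
  have hφderiv : ∀ t : ℝ, HasDerivAt φ (a t) t := fun t =>
    intervalIntegral.integral_hasDerivAt_right (ha.intervalIntegrable 0 t)
      (ha.stronglyMeasurableAtFilter _ _) ha.continuousAt
  set y : ℝ → (Fin n → ℝ) := fun t => u (φ t) with hydef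
  have hφmem : ∀ t ∈ Icc (0:ℝ) t₁, φ t ∈ I := fun t ht => hsub ⟨t, ht, rfl⟩
  have hymem : ∀ t ∈ Icc (0:ℝ) t₁, y t ∈ Ω := fun t ht => humem _ (hφmem t ht)
  have hy : ∀ t ∈ Icc (0:ℝ) t₁, HasDerivAt y (a t • w (y t)) t := by
    intro t ht
    exact (hu _ (hφmem t ht)).scomp t (hφderiv t)
  have hφ0 : φ 0 = 0 := intervalIntegral.integral_same
  have hy0 : y 0 = u 0 := by simp [hydef, hφ0]
  have key : ∀ t ∈ Icc (0:ℝ) t₁, x t = y t := by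
    set S : Set ℝ := {t | t ∈ Icc (0:ℝ) t₁ ∧ ∀ s ∈ Icc (0:ℝ) t, x s = y s} with hSdef
    have h0S : (0:ℝ) ∈ S := by
      refine ⟨⟨le_rfl, ht₁.le⟩, fun s hs => ?_⟩
      have : s = 0 := le_antisymm hs.2 hs.1
      rw [this, hx0, hy0]
    have hSbdd : BddAbove S := ⟨t₁, fun t ht => ht.1.2⟩
    set c := sSup S with hcdef
    have h0c : (0:ℝ) ≤ c := le_csSup hSbdd h0S
    have hct₁ : c ≤ t₁ := csSup_le ⟨0, h0S⟩ fun t ht => ht.1.2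
    have hcIcc : c ∈ Icc (0:ℝ) t₁ := ⟨h0c, hct₁⟩
    have hlt : ∀ s, 0 ≤ s → s < c → x s = y s := by
      intro s hs0 hsc
      obtain ⟨t, htS, hst⟩ := exists_lt_of_lt_csSup ⟨0, h0S⟩ hsc
      exact htS.2 s ⟨hs0, hst.le⟩
    have hc : x c = y c := by
      rcases eq_or_lt_of_le h0c with h | h
      · rw [← h, hx0, hy0]
      · have hxc : Filter.Tendsto x (nhdsWithin c (Iio c)) (nhds (x c)) :=
          ((hx c hcIcc).continuousAt.continuousWithinAt)
        have hyc : Filter.Tendsto y (nhdsWithin c (Iio c)) (nhds (y c)) :=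
          ((hy c hcIcc).continuousAt.continuousWithinAt)
        have heq : x =ᶠ[nhdsWithin c (Iio c)] y := by
          filter_upwards [Ioo_mem_nhdsLT_of_mem (⟨h, le_rfl⟩ : c ∈ Ioc (0:ℝ) c)]
            with s hs
          exact hlt s hs.1.le hs.2
        exact tendsto_nhds_unique (hxc.congr' heq) hyc
    have hcS : c ∈ S := by
      refine ⟨hcIcc, fun s hs => ?_⟩
      rcases eq_or_lt_of_le hs.2 with h | h
      · rw [h]; exact hc
      · exact hlt s hs.1 h
    have hceq : c = t₁ := by
      by_contra hne
      have hclt : c < t₁ := lt_of_le_of_ne hct₁ hne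
      -- local uniqueness to the right of c
      obtain ⟨ε, hε, K, hK⟩ := hwlip (x c) (hxmem c hcIcc)
      set s0 : Set (Fin n → ℝ) := Metric.ball (x c) ε ∩ Ω with hs0def
      have hs0open : IsOpen s0 := Metric.isOpen_ball.inter hΩ
      have hxcs0 : x c ∈ s0 := ⟨Metric.mem_ball_self hε, hxmem c hcIcc⟩
      have hycs0 : y c ∈ s0 := hc ▸ hxcs0
      have hxev : ∀ᶠ t in nhds c, x t ∈ s0 ∧ y t ∈ s0 := by
        have h1 := (hx c hcIcc).continuousAt.eventually_mem (hs0open.mem_nhds hxcs0)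
        have h2 := (hy c hcIcc).continuousAt.eventually_mem (hs0open.mem_nhds hycs0)
        exact h1.and h2
      obtain ⟨δ₂, hδ₂, hball⟩ := Metric.eventually_nhds_iff.mp hxev
      set δ := min (δ₂ / 2) (t₁ - c) with hδdef
      have hδpos : 0 < δ := lt_min (half_pos hδ₂) (sub_pos.mpr hclt)
      have hcδ : c + δ ≤ t₁ := by
        have := min_le_right (δ₂ / 2) (t₁ - c)
        linarith
      have hIccsub : Icc c (c + δ) ⊆ Icc (0:ℝ) t₁ := fun t ht =>
          ⟨h0c.trans ht.1, ht.2.trans hcδ⟩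
      have hmem : ∀ t ∈ Icc c (c + δ), x t ∈ s0 ∧ y t ∈ s0 := by
        intro t ht
        apply hball
        rw [Real.dist_eq, abs_of_nonneg (sub_nonneg.mpr ht.1)]
        have h1 : t - c ≤ δ := by linarith [ht.2]
        have h2 : δ ≤ δ₂ / 2 := min_le_left _ _
        linarith
      -- bound on a
      obtain ⟨C, hC⟩ := isCompact_Icc.exists_bound_of_continuousOn
        (s := Icc c (c + δ)) ha.continuousOn
      set M : ℝ := max C 0 with hMdef
      have hM0 : 0 ≤ M := le_max_right _ _
      have haM : ∀ t ∈ Icc c (c + δ), |a t| ≤ M :=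
        fun t ht => (hC t ht).trans (le_max_left _ _)
      set A : ℝ → ℝ := fun t => max (-M) (min (a t) M) with hAdef
      have hAeq : ∀ t ∈ Icc c (c + δ), A t = a t := by
        intro t ht
        have h := abs_le.mp (haM t ht)
        simp [hAdef, min_eq_left h.2, max_eq_right h.1]
      have hAbd : ∀ t, |A t| ≤ M := by
        intro t
        rw [abs_le]
        constructor
        · exact le_max_left _ _
        · exact max_le (by linarith) ((min_le_right _ _))
      set v : ℝ → (Fin n → ℝ) → (Fin n → ℝ) := fun t z => A t • w z with hvdef
      have hv : ∀ t, LipschitzOnWith (M.toNNReal * K) (v t) s0 := by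
        intro t
        rw [lipschitzOnWith_iff_dist_le_mul]
        intro z₁ hz₁ z₂ hz₂
        have hlip := lipschitzOnWith_iff_dist_le_mul.mp hK z₁ hz₁ z₂ hz₂
        calc dist (v t z₁) (v t z₂) = |A t| * dist (w z₁) (w z₂) := by
              simp [hvdef, dist_smul₀, Real.norm_eq_abs]
          _ ≤ M * (K * dist z₁ z₂) := by
              apply mul_le_mul (hAbd t) hlip dist_nonneg hM0
          _ = (M.toNNReal * K : NNReal) * dist z₁ z₂ := by
              push_cast
              rw [Real.coe_toNNReal _ hM0]; ring
      have hxcont : ContinuousOn x (Icc c (c + δ)) := fun t ht =>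
        ((hx t (hIccsub ht)).continuousAt).continuousWithinAt
      have hycont : ContinuousOn y (Icc c (c + δ)) := fun t ht =>
        ((hy t (hIccsub ht)).continuousAt).continuousWithinAt
      have heqon : EqOn x y (Icc c (c + δ)) := by
        apply ODE_solution_unique_of_mem_Icc_right (s := fun _ => s0) (fun t _ => hv t) hxcont
          ?_ (fun t ht => (hmem t (Ico_subset_Icc_self ht)).1) hycont
          ?_ (fun t ht => (hmem t (Ico_subset_Icc_self ht)).2) hc
        · intro t ht
          have := hx t (hIccsub (Ico_subset_Icc_self ht))
          rw [show v t (x t) = a t • w (x t) by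
            simp [hvdef, hAeq t (Ico_subset_Icc_self ht)]]
          exact this.hasDerivWithinAt
        · intro t ht
          have := hy t (hIccsub (Ico_subset_Icc_self ht))
          rw [show v t (y t) = a t • w (y t) by
            simp [hvdef, hAeq t (Ico_subset_Icc_self ht)]]
          exact this.hasDerivWithinAt
      have hcδS : c + δ ∈ S := by
        refine ⟨⟨by linarith, hcδ⟩, fun s hs => ?_⟩
        rcases le_or_gt s c with h | h
        · exact hcS.2 s ⟨hs.1, h⟩
        · exact heqon ⟨h.le, hs.2⟩
      have := le_csSup hSbdd hcδS
      linarith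
    intro t ht
    exact (hceq ▸ hcS).2 t ht
  refine ⟨key, fun hint => ?_⟩
  have h := key t₁ ⟨ht₁.le, le_rfl⟩
  rw [h]
  show u (φ t₁) = u t₁
  rw [show φ t₁ = t₁ from hint]
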